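/- arXiv:2511.00575 — 2 statements merged into one kernel-verified Lean document; each statement's English description precedes it below -/
import Mathlib

section
/- Let m and n be positive natural numbers with n ≤ m and n even. Then the complete bipartite graph K_{m,n} is Perrin cordial. -/
/-- The reindexed Perrin sequence: `P 0 = 0`, `P 1 = 3`, `P 2 = 0`, `P 3 = 2`,
and `P n = P (n-2) + P (n-3)` thereafter
(so `P 4 = 3`, `P 5 = 2`, `P 6 = 5`, ...). -/
def perrin : ℕ → ℕ
  | 0 => 0
  | 1 => 3
  | 2 => 0
  | 3 => 2
  | n + 4 => perrin (n + 2) + perrin (n + 1)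

/-- The induced edge label: `f` assigns to each vertex the index of a Perrin number,
and an edge `uv` gets the label `(P (f u) + P (f v)) mod 2`. -/
def perrinEdgeLabel {V : Type*} (f : V → ℕ) : Sym2 V → ℕ :=
  Sym2.lift ⟨fun u v => (perrin (f u) + perrin (f v)) % 2, fun u v => by simp [Nat.add_comm]⟩

/-- `eCount G f i` is the number of edges of `G` whose induced label under `f` is `i`. -/
noncomputable def eCount {V : Type*} (G : SimpleGraph V) (f : V → ℕ) (i : ℕ) : ℕ :=
  {e | e ∈ G.edgeSet ∧ perrinEdgeLabel f e = i}.ncard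

/-- A finite simple graph `G` on `N` vertices is Perrin cordial if there is an injective
labeling of its vertices by indices in `{0, 1, ..., N}` such that the numbers of edges
with induced label `0` and `1` differ by at most `1`. -/
def IsPerrinCordial {V : Type*} [Fintype V] (G : SimpleGraph V) : Prop :=
  ∃ f : V → Fin (Fintype.card V + 1), Function.Injective f ∧
    |(eCount G (fun v => (f v : ℕ)) 0 : ℤ) - (eCount G (fun v => (f v : ℕ)) 1 : ℤ)| ≤ 1

lemma perrin_period (k : ℕ) : perrin (k + 8) % 2 = perrin (k + 1) % 2 := by
  induction k using Nat.strong_induction_on with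
  | _ k ih =>
    match k with
    | 0 => decide
    | 1 => decide
    | 2 => decide
    | (k+3) =>
      have h1 : perrin (k+9) % 2 = perrin (k+2) % 2 := by
        have h := ih (k+1) (by omega)
        rwa [show k+1+8 = k+9 by omega, show k+1+1 = k+2 by omega] at h
      have h2 := ih k (by omega)
      have e1 : perrin (k + 11) = perrin (k+9) + perrin (k+8) := by
        show perrin ((k+7) + 4) = _; rw [perrin]
      have e2 : perrin (k + 4) = perrin (k+2) + perrin (k+1) := by rw [perrin]
      show perrin (k + 11) % 2 = perrin (k + 4) % 2
      omega

lemma perrin_seven_mul (q t : ℕ) : perrin (7 * q + t + 1) % 2 = perrin (t + 1) % 2 := by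
  induction q with
  | zero => simp
  | succ q ih =>
    have h := perrin_period (7 * q + t)
    have e : 7 * (q + 1) + t + 1 = 7 * q + t + 8 := by ring
    rw [e]
    omega

def fB (b : ℕ) : ℕ := 7 * (b / 6) + b % 6 + 1

lemma fB_eq (b : ℕ) : fB b = b + b / 6 + 1 := by unfold fB; omega

lemma perrin_fB (b : ℕ) : perrin (fB b) % 2 = perrin (b % 6 + 1) % 2 := by
  unfold fB; exact perrin_seven_mul _ _

lemma fB_flip (b : ℕ) (hb : b % 2 = 0) :
    perrin (fB b) % 2 + perrin (fB (b + 1)) % 2 = 1 := by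
  have h1 := perrin_fB b
  have h2 := perrin_fB (b + 1)
  have hr : b % 6 = 0 ∨ b % 6 = 2 ∨ b % 6 = 4 := by omega
  have hb1 : (b + 1) % 6 = b % 6 + 1 := by omega
  rw [hb1] at h2
  have e1 : perrin 1 % 2 = 1 := by decide
  have e2 : perrin 2 % 2 = 0 := by decide
  have e3 : perrin 3 % 2 = 0 := by decide
  have e4 : perrin 4 % 2 = 1 := by decide
  have e5 : perrin 5 % 2 = 0 := by decide
  have e6 : perrin 6 % 2 = 1 := by decide
  rcases hr with h | h | h <;> rw [h] at h1 h2 <;> norm_num at h1 h2 <;> omega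

/-- the partner function on `B` indices: swap `2j ↔ 2j+1`. -/
def sw (b : ℕ) : ℕ := if b % 2 = 0 then b + 1 else b - 1

lemma sw_sw (b : ℕ) : sw (sw b) = b := by unfold sw; split <;> split <;> omega

lemma sw_lt {n b : ℕ} (hn : n % 2 = 0) (hb : b < n) : sw b < n := by
  unfold sw; split <;> omega

lemma sw_flip (b : ℕ) : perrin (fB b) % 2 + perrin (fB (sw b)) % 2 = 1 := by
  by_cases h : b % 2 = 0
  · rw [sw, if_pos h]
    exact fB_flip b h
  · rw [sw, if_neg h]
    have := fB_flip (b - 1) (by omega)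
    have e : b - 1 + 1 = b := by omega
    rw [e] at this
    omega

/-- `K_{m,n}` with `1 ≤ n ≤ m` and `n` even is Perrin cordial. -/
theorem completeBipartiteGraph_isPerrinCordial_of_even (m n : ℕ) (hm : 0 < m) (hn : 0 < n)
    (hnm : n ≤ m) (hne : Even n) :
    IsPerrinCordial (completeBipartiteGraph (Fin m) (Fin n)) := by
  classical
  have hn2 : n % 2 = 0 := Nat.even_iff.mp hne
  -- B-side labels
  have hfBlt : ∀ b : Fin n, fB b.val < m + n + 1 := by
    intro b
    have hb := b.isLt
    rw [fB_eq]
    omega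
  set fB' : Fin n → Fin (m + n + 1) := fun b => ⟨fB b.val, hfBlt b⟩ with hfB'
  have hfBinj : Function.Injective fB' := by
    intro a b hab
    have : fB a.val = fB b.val := congrArg Fin.val hab
    rw [fB_eq, fB_eq] at this
    exact Fin.ext (by omega)
  -- A-side labels: embed into the complement of the B-labels
  set T : Finset (Fin (m + n + 1)) := Finset.image fB' Finset.univ with hT
  have hTcard : T.card = n := by
    rw [hT, Finset.card_image_of_injective _ hfBinj, Finset.card_univ, Fintype.card_fin]
  have hcard : Fintype.card (Fin m) ≤ Tᶜ.card := by
    rw [Finset.card_compl, hTcard, Fintype.card_fin, Fintype.card_fin]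
    omega
  obtain ⟨emb, hemb⟩ := Function.Embedding.exists_of_card_le_finset hcard
  have hembT : ∀ a : Fin m, emb a ∉ T := by
    intro a haT
    have : emb a ∈ (Tᶜ : Finset _) := hemb ⟨a, rfl⟩
    simp at this
    exact this haT
  -- the full labeling
  set f0 : Fin m ⊕ Fin n → Fin (m + n + 1) := Sum.elim (fun a => emb a) fB' with hf0
  have hf0inj : Function.Injective f0 := by
    rintro (a | a) (b | b) hab
    · exact congrArg Sum.inl (emb.injective hab)
    · refine absurd ?_ (hembT a)
      have h' : (emb a : Fin (m + n + 1)) = fB' b := hab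
      rw [h']
      exact Finset.mem_image_of_mem fB' (Finset.mem_univ b)
    · refine absurd ?_ (hembT b)
      have h' : (emb b : Fin (m + n + 1)) = fB' a := hab.symm
      rw [h']
      exact Finset.mem_image_of_mem fB' (Finset.mem_univ a)
    · exact congrArg Sum.inr (hfBinj hab)
  have hcast : m + n + 1 = Fintype.card (Fin m ⊕ Fin n) + 1 := by simp
  refine ⟨fun v => Fin.cast hcast (f0 v), ?_, ?_⟩
  · intro a b hab
    have h' : Fin.cast hcast (f0 a) = Fin.cast hcast (f0 b) := hab
    have h2 := congrArg Fin.val h'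
    rw [Fin.coe_cast, Fin.coe_cast] at h2
    exact hf0inj (Fin.ext h2)
  -- now count the edges
  set G := completeBipartiteGraph (Fin m) (Fin n) with hG
  set g : Fin m ⊕ Fin n → ℕ := fun v => ((Fin.cast hcast (f0 v) : Fin _) : ℕ) with hg
  have hgB : ∀ b : Fin n, g (Sum.inr b) = fB b.val := fun b => rfl
  -- the swapping involution on vertices
  set σ : Fin n → Fin n := fun b => ⟨sw b.val, sw_lt hn2 b.isLt⟩ with hσ
  have hσσ : ∀ b, σ (σ b) = b := by
    intro b; apply Fin.ext; simp [hσ, sw_sw]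
  set τ : Fin m ⊕ Fin n → Fin m ⊕ Fin n := Sum.map id σ with hτ
  have hττ : ∀ v, τ (τ v) = v := by rintro (a | b) <;> simp [hτ, hσσ]
  have hτinj : Function.Injective τ :=
    Function.LeftInverse.injective hττ
  set Φ : Sym2 (Fin m ⊕ Fin n) → Sym2 (Fin m ⊕ Fin n) := Sym2.map τ with hΦ
  have hΦΦ : ∀ e, Φ (Φ e) = e := by
    intro e
    rw [hΦ, Sym2.map_map]
    have : τ ∘ τ = id := funext hττ
    rw [this, Sym2.map_id]
    rfl
  have hΦinj : Function.Injective Φ := Sym2.map.injective hτinj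
  -- key flip property on edges
  have key : ∀ e ∈ G.edgeSet, Φ e ∈ G.edgeSet ∧
      perrinEdgeLabel g (Φ e) + perrinEdgeLabel g e = 1 := by
    intro e he
    induction e using Sym2.ind with
    | _ u v =>
      rw [SimpleGraph.mem_edgeSet] at he
      have hlbl : ∀ x y, perrinEdgeLabel g s(x, y) = (perrin (g x) + perrin (g y)) % 2 :=
        fun x y => rfl
      have hmap : Φ s(u, v) = s(τ u, τ v) := Sym2.map_pair_eq τ u v
      rcases u with a | b <;> rcases v with a' | b'
      · simp [hG, completeBipartiteGraph] at he
      · -- inl a, inr b'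
        constructor
        · rw [hmap, SimpleGraph.mem_edgeSet]
          simp [hG, completeBipartiteGraph, hτ]
        · rw [hmap, hlbl, hlbl]
          have hflip := sw_flip b'.val
          have : g (τ (Sum.inr b')) = fB (sw b'.val) := rfl
          rw [show τ (Sum.inl a) = Sum.inl a from rfl, this, hgB]
          omega
      · -- inr b, inl a'
        constructor
        · rw [hmap, SimpleGraph.mem_edgeSet]
          simp [hG, completeBipartiteGraph, hτ]
        · rw [hmap, hlbl, hlbl]
          have hflip := sw_flip b.val
          have : g (τ (Sum.inr b)) = fB (sw b.val) := rfl
          rw [show τ (Sum.inl a') = Sum.inl a' from rfl, this, hgB]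
          omega
      · simp [hG, completeBipartiteGraph] at he
  -- the two edge classes biject under Φ
  have himg : Φ '' {e | e ∈ G.edgeSet ∧ perrinEdgeLabel g e = 0} =
      {e | e ∈ G.edgeSet ∧ perrinEdgeLabel g e = 1} := by
    ext e
    constructor
    · rintro ⟨e', ⟨he', hl⟩, rfl⟩
      obtain ⟨h1, h2⟩ := key e' he'
      exact ⟨h1, by omega⟩
    · rintro ⟨he, hl⟩
      obtain ⟨h1, h2⟩ := key e he
      refine ⟨Φ e, ⟨h1, ?_⟩, hΦΦ e⟩
      obtain ⟨h1', h2'⟩ := key (Φ e) h1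
      omega
  have hEq : eCount G g 0 = eCount G g 1 := by
    unfold eCount
    rw [← himg, Set.ncard_image_of_injective _ hΦinj]
  show |(eCount G g 0 : ℤ) - (eCount G g 1 : ℤ)| ≤ 1
  rw [hEq]
  simp
end

section
/- For every natural number n ≥ 1, the friendship graph F_n is Perrin cordial if and only if n ≢ 2 (mod 4). -/
set_option linter.unusedSectionVars false
set_option linter.unusedVariables false


def pbit (m : ℕ) : ℕ := perrin m % 2

lemma pbit_period_aux (m : ℕ) :
    pbit (m + 8) = pbit (m + 1) ∧ pbit (m + 9) = pbit (m + 2) ∧ pbit (m + 10) = pbit (m + 3) := by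
  induction m with
  | zero => decide
  | succ k ih =>
    obtain ⟨h1, h2, h3⟩ := ih
    refine ⟨h2, h3, ?_⟩
    show pbit (k + 7 + 4) = pbit (k + 4)
    have : perrin (k + 7 + 4) = perrin (k + 9) + perrin (k + 8) := rfl
    have h4 : perrin (k + 4) = perrin (k + 2) + perrin (k + 1) := rfl
    unfold pbit at *
    omega

lemma pbit_add_seven (m : ℕ) : pbit (m + 1 + 7) = pbit (m + 1) := (pbit_period_aux m).1

lemma pbit_eq (m : ℕ) (hm : 1 ≤ m) :
    pbit m = if m % 7 = 0 ∨ m % 7 = 1 ∨ m % 7 = 4 ∨ m % 7 = 6 then 1 else 0 := by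
  induction m using Nat.strong_induction_on with
  | _ m ih =>
    rcases lt_or_ge m 8 with h | h
    · interval_cases m <;> decide
    · have h1 : m = (m - 8) + 1 + 7 := by omega
      have h2 : pbit m = pbit (m - 8 + 1) := by
        conv_lhs => rw [h1]
        exact pbit_add_seven _
      have h3 := ih (m - 8 + 1) (by omega) (by omega)
      have h4 : (m - 8 + 1) % 7 = m % 7 := by omega
      rw [h2, h3, h4]

/-- count of parity-one perrin indices below M -/
def pcount (M : ℕ) : ℕ := ((Finset.range M).filter (fun m => pbit m = 1)).card

lemma pcount_eq (M : ℕ) :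
    pcount M = 4 * (M / 7) +
      (if M % 7 ≥ 5 then 3 else if M % 7 ≥ 2 then 2 else if M % 7 ≥ 1 then 1 else 0)
      - (if M ≥ 1 then 1 else 0) := by
  induction M with
  | zero => decide
  | succ k ih =>
    have hstep : pcount (k + 1) = pcount k + (if pbit k = 1 then 1 else 0) := by
      unfold pcount
      rw [Finset.range_add_one, Finset.filter_insert]
      split_ifs with h
      · rw [Finset.card_insert_of_notMem (by simp)]
      · simp
    rcases Nat.eq_zero_or_pos k with rfl | hk
    · decide
    · have := pbit_eq k hk
      rw [hstep, ih]
      split_ifs at this ⊢ <;> omega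

/-- The friendship graph `F n`: the apex `none` is adjacent to each of the `2n` vertices
`some i`, and `some i` is adjacent to `some j` (for `i ≠ j`) exactly when `{i, j}` is one
of the pairs `{0, 1}, {2, 3}, ...` (i.e. `i / 2 = j / 2`), giving `n` triangles sharing
the apex. -/
def friendshipGraph (n : ℕ) : SimpleGraph (Option (Fin (2 * n))) :=
  SimpleGraph.fromRel (fun a b =>
    a = none ∨ ∃ i j : Fin (2 * n), a = some i ∧ b = some j ∧ i.val / 2 = j.val / 2)

/-- the two leaves of triangle j -/
def lva (n : ℕ) (j : Fin n) : Fin (2 * n) := ⟨2 * j.val, by omega⟩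
def lvb (n : ℕ) (j : Fin n) : Fin (2 * n) := ⟨2 * j.val + 1, by omega⟩

/-- edge enumeration -/
def eFun (n : ℕ) : Fin n × Fin 3 → Sym2 (Option (Fin (2 * n))) := fun p =>
  match p.2 with
  | 0 => s(none, some (lva n p.1))
  | 1 => s(none, some (lvb n p.1))
  | 2 => s(some (lva n p.1), some (lvb n p.1))

lemma friendship_adj (n : ℕ) (a b : Option (Fin (2 * n))) :
    (friendshipGraph n).Adj a b ↔ a ≠ b ∧
      (a = none ∨ b = none ∨ (∃ i j : Fin (2 * n), a = some i ∧ b = some j ∧ i.val / 2 = j.val / 2)) := by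
  constructor
  · rintro ⟨hne, h | h⟩
    · refine ⟨hne, ?_⟩
      rcases h with h | ⟨i, j, hi, hj, hij⟩
      · exact Or.inl h
      · exact Or.inr (Or.inr ⟨i, j, hi, hj, hij⟩)
    · refine ⟨hne, ?_⟩
      rcases h with h | ⟨i, j, hi, hj, hij⟩
      · exact Or.inr (Or.inl h)
      · exact Or.inr (Or.inr ⟨j, i, hj, hi, hij.symm⟩)
  · rintro ⟨hne, h | h | ⟨i, j, hi, hj, hij⟩⟩
    · exact ⟨hne, Or.inl (Or.inl h)⟩
    · exact ⟨hne, Or.inr (Or.inl h)⟩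
    · exact ⟨hne, Or.inl (Or.inr ⟨i, j, hi, hj, hij⟩)⟩

lemma edgeSet_eq (n : ℕ) : (friendshipGraph n).edgeSet = Set.range (eFun n) := by
  ext e
  induction e using Sym2.ind with
  | _ a b =>
    rw [SimpleGraph.mem_edgeSet, friendship_adj]
    constructor
    · rintro ⟨hne, h⟩
      match a, b with
      | none, none => exact absurd rfl hne
      | none, some i =>
        rcases Nat.even_or_odd i.val with ⟨t, ht⟩ | ⟨t, ht⟩
        · refine ⟨(⟨i.val / 2, by omega⟩, 0), ?_⟩
          simp only [eFun]
          rw [Sym2.eq_iff]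
          exact Or.inl ⟨rfl, congrArg some (Fin.ext (show 2 * (i.val / 2) = i.val by omega))⟩
        · refine ⟨(⟨i.val / 2, by omega⟩, 1), ?_⟩
          simp only [eFun]
          rw [Sym2.eq_iff]
          exact Or.inl ⟨rfl, congrArg some (Fin.ext (show 2 * (i.val / 2) + 1 = i.val by omega))⟩
      | some i, none =>
        rcases Nat.even_or_odd i.val with ⟨t, ht⟩ | ⟨t, ht⟩
        · refine ⟨(⟨i.val / 2, by omega⟩, 0), ?_⟩
          simp only [eFun]
          rw [Sym2.eq_iff]
          exact Or.inr ⟨rfl, congrArg some (Fin.ext (show 2 * (i.val / 2) = i.val by omega))⟩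
        · refine ⟨(⟨i.val / 2, by omega⟩, 1), ?_⟩
          simp only [eFun]
          rw [Sym2.eq_iff]
          exact Or.inr ⟨rfl, congrArg some (Fin.ext (show 2 * (i.val / 2) + 1 = i.val by omega))⟩
      | some i, some j =>
        rcases h with h | h | ⟨i', j', hi, hj, hij⟩
        · exact absurd h (by simp)
        · exact absurd h (by simp)
        · injection hi with hi'
          injection hj with hj'
          subst hi'
          subst hj'
          have hne' : i.val ≠ j.val := fun hc => hne (by rw [Fin.ext hc])
          rcases (by omega : i.val % 2 = 0 ∧ j.val = i.val + 1 ∨ j.val % 2 = 0 ∧ i.val = j.val + 1) with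
            ⟨h1, h2⟩ | ⟨h1, h2⟩
          · refine ⟨(⟨i.val / 2, by omega⟩, 2), ?_⟩
            simp only [eFun]
            rw [Sym2.eq_iff]
            exact Or.inl ⟨congrArg some (Fin.ext (show 2 * (i.val / 2) = i.val by omega)),
              congrArg some (Fin.ext (show 2 * (i.val / 2) + 1 = j.val by omega))⟩
          · refine ⟨(⟨j.val / 2, by omega⟩, 2), ?_⟩
            simp only [eFun]
            rw [Sym2.eq_iff]
            exact Or.inr ⟨congrArg some (Fin.ext (show 2 * (j.val / 2) = j.val by omega)),
              congrArg some (Fin.ext (show 2 * (j.val / 2) + 1 = i.val by omega))⟩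
    · rintro ⟨⟨j, c⟩, hc⟩
      fin_cases c <;> simp only [eFun] at hc <;> rw [Sym2.eq_iff] at hc
      · rcases hc with ⟨rfl, rfl⟩ | ⟨rfl, rfl⟩
        · exact ⟨by simp, Or.inl rfl⟩
        · exact ⟨by simp, Or.inr (Or.inl rfl)⟩
      · rcases hc with ⟨rfl, rfl⟩ | ⟨rfl, rfl⟩
        · exact ⟨by simp, Or.inl rfl⟩
        · exact ⟨by simp, Or.inr (Or.inl rfl)⟩
      · rcases hc with ⟨rfl, rfl⟩ | ⟨rfl, rfl⟩
        · refine ⟨?_, Or.inr (Or.inr ⟨lva n j, lvb n j, rfl, rfl, ?_⟩)⟩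
          · simp only [ne_eq, Option.some.injEq]
            intro hcc
            have := congrArg Fin.val hcc
            simp only [lva, lvb] at this
            omega
          · simp only [lva, lvb]
            omega
        · refine ⟨?_, Or.inr (Or.inr ⟨lvb n j, lva n j, rfl, rfl, ?_⟩)⟩
          · simp only [ne_eq, Option.some.injEq]
            intro hcc
            have := congrArg Fin.val hcc
            simp only [lva, lvb] at this
            omega
          · simp only [lva, lvb]
            omega

lemma eFun_injective (n : ℕ) : Function.Injective (eFun n) := by
  rintro ⟨j, c⟩ ⟨j', c'⟩ h
  fin_cases c <;> fin_cases c' <;>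
    simp only [eFun] at h <;> rw [Sym2.eq_iff] at h <;>
    simp_all [lva, lvb, Fin.ext_iff, Prod.ext_iff] <;> omega

lemma label_mk {V : Type*} (f : V → ℕ) (x y : V) :
    perrinEdgeLabel f s(x, y) = (pbit (f x) + pbit (f y)) % 2 := by
  simp [perrinEdgeLabel, pbit, Nat.add_mod]

lemma eCount_eq (n : ℕ) (f : Option (Fin (2 * n)) → ℕ) (i : ℕ) :
    eCount (friendshipGraph n) f i =
      (Finset.univ.filter (fun p : Fin n × Fin 3 => perrinEdgeLabel f (eFun n p) = i)).card := by
  unfold eCount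
  have h1 : {e | e ∈ (friendshipGraph n).edgeSet ∧ perrinEdgeLabel f e = i}
      = eFun n '' {p | perrinEdgeLabel f (eFun n p) = i} := by
    rw [edgeSet_eq]
    ext e
    constructor
    · rintro ⟨⟨p, rfl⟩, hl⟩
      exact ⟨p, hl, rfl⟩
    · rintro ⟨p, hl, rfl⟩
      exact ⟨⟨p, rfl⟩, hl⟩
  rw [h1, Set.ncard_image_of_injective _ (eFun_injective n)]
  have h2 : {p : Fin n × Fin 3 | perrinEdgeLabel f (eFun n p) = i}
      = ↑(Finset.univ.filter (fun p : Fin n × Fin 3 => perrinEdgeLabel f (eFun n p) = i)) := by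
    ext p; simp
  rw [h2, Set.ncard_coe_finset]

lemma eCount_sum (n : ℕ) (f : Option (Fin (2 * n)) → ℕ) (i : ℕ) :
    eCount (friendshipGraph n) f i =
      ∑ j : Fin n,
        ((if (pbit (f none) + pbit (f (some (lva n j)))) % 2 = i then 1 else 0)
          + (if (pbit (f none) + pbit (f (some (lvb n j)))) % 2 = i then 1 else 0)
          + (if (pbit (f (some (lva n j))) + pbit (f (some (lvb n j)))) % 2 = i then 1 else 0)) := by
  rw [eCount_eq, Finset.card_filter, Fintype.sum_prod_type]
  refine Finset.sum_congr rfl fun j _ => ?_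
  rw [Fin.sum_univ_three]
  have e0 : eFun n (j, 0) = s(none, some (lva n j)) := rfl
  have e1 : eFun n (j, 1) = s(none, some (lvb n j)) := rfl
  have e2 : eFun n (j, 2) = s(some (lva n j), some (lvb n j)) := rfl
  rw [e0, e1, e2, label_mk, label_mk, label_mk]

lemma pbit_lt (m : ℕ) : pbit m < 2 := Nat.mod_lt _ (by omega)

lemma eCount_add (n : ℕ) (f : Option (Fin (2 * n)) → ℕ) :
    eCount (friendshipGraph n) f 0 + eCount (friendshipGraph n) f 1 = 3 * n := by
  rw [eCount_sum, eCount_sum, ← Finset.sum_add_distrib]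
  have : ∀ j : Fin n, _ = 3 := fun j => rfl
  rw [Finset.sum_congr rfl (fun j _ => (by split_ifs <;> omega :
    ((if (pbit (f none) + pbit (f (some (lva n j)))) % 2 = 0 then 1 else 0)
      + (if (pbit (f none) + pbit (f (some (lvb n j)))) % 2 = 0 then 1 else 0)
      + (if (pbit (f (some (lva n j))) + pbit (f (some (lvb n j)))) % 2 = 0 then 1 else 0)
      + ((if (pbit (f none) + pbit (f (some (lva n j)))) % 2 = 1 then 1 else 0)
      + (if (pbit (f none) + pbit (f (some (lvb n j)))) % 2 = 1 then 1 else 0)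
      + (if (pbit (f (some (lva n j))) + pbit (f (some (lvb n j)))) % 2 = 1 then 1 else 0)) = 3)))]
  simp [Finset.sum_const, mul_comm]

lemma eCount_one_even (n : ℕ) (f : Option (Fin (2 * n)) → ℕ) :
    eCount (friendshipGraph n) f 1 % 2 = 0 := by
  rw [eCount_sum, Finset.sum_nat_mod]
  have : ∀ j : Fin n, ((if (pbit (f none) + pbit (f (some (lva n j)))) % 2 = 1 then 1 else 0)
      + (if (pbit (f none) + pbit (f (some (lvb n j)))) % 2 = 1 then 1 else 0)
      + (if (pbit (f (some (lva n j))) + pbit (f (some (lvb n j)))) % 2 = 1 then (1:ℕ) else 0)) % 2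
      = 0 := by
    intro j
    have h1 := pbit_lt (f none)
    have h2 := pbit_lt (f (some (lva n j)))
    have h3 := pbit_lt (f (some (lvb n j)))
    split_ifs <;> omega
  rw [Finset.sum_congr rfl (fun j _ => this j)]
  simp

lemma forward_dir (n : ℕ) (h2 : n % 4 = 2) : ¬ IsPerrinCordial (friendshipGraph n) := by
  rintro ⟨f, hinj, habs⟩
  have hadd := eCount_add n (fun v => ((f v : ℕ)))
  have heven := eCount_one_even n (fun v => ((f v : ℕ)))
  rw [abs_le] at habs
  obtain ⟨hl, hr⟩ := habs
  omega

section Construction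

variable (n : ℕ)

/-- the labels of parity one among 0..2n+1 -/
def S1 : Finset ℕ := (Finset.range (2 * n + 2)).filter (fun m => pbit m = 1)
def S0 : Finset ℕ := (Finset.range (2 * n + 2)).filter (fun m => ¬ pbit m = 1)

def labList : List ℕ := ((S1 n).sort (· ≤ ·)) ++ ((S0 n).sort (· ≤ ·))

lemma labList_length : (labList n).length = 2 * n + 2 := by
  unfold labList
  rw [List.length_append, Finset.length_sort, Finset.length_sort]
  unfold S1 S0
  rw [Finset.card_filter_add_card_filter_not, Finset.card_range]

lemma S1_card : (S1 n).card = pcount (2 * n + 2) := rfl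

lemma labList_nodup : (labList n).Nodup := by
  unfold labList
  refine List.Nodup.append (Finset.sort_nodup _ _) (Finset.sort_nodup _ _) ?_
  intro a ha hb
  rw [Finset.mem_sort] at ha hb
  unfold S1 at ha
  unfold S0 at hb
  rw [Finset.mem_filter] at ha hb
  exact hb.2 ha.2

def sig : ℕ → ℕ := fun i => (labList n).getD i 0

lemma sig_mem (i : ℕ) (hi : i < 2 * n + 2) : sig n i ∈ labList n := by
  unfold sig
  rw [List.getD_eq_getElem _ _ (by rw [labList_length]; exact hi)]
  exact List.getElem_mem _

lemma sig_lt (i : ℕ) (hi : i < 2 * n + 2) : sig n i < 2 * n + 2 := by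
  have := sig_mem n i hi
  unfold labList at this
  rw [List.mem_append, Finset.mem_sort, Finset.mem_sort] at this
  unfold S1 S0 at this
  rcases this with h | h <;> rw [Finset.mem_filter, Finset.mem_range] at h <;> exact h.1

lemma sig_inj (i i' : ℕ) (hi : i < 2 * n + 2) (hi' : i' < 2 * n + 2)
    (h : sig n i = sig n i') : i = i' := by
  unfold sig at h
  rw [List.getD_eq_getElem _ _ (by rw [labList_length]; exact hi),
    List.getD_eq_getElem _ _ (by rw [labList_length]; exact hi')] at h
  exact ((labList_nodup n).getElem_inj_iff).mp h

lemma sig_pbit_one (i : ℕ) (hi : i < pcount (2 * n + 2)) : pbit (sig n i) = 1 := by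
  have hi' : i < ((S1 n).sort (· ≤ ·)).length := by
    rw [Finset.length_sort, S1_card]; exact hi
  have : sig n i = ((S1 n).sort (· ≤ ·))[i] := by
    unfold sig labList
    rw [List.getD_append _ _ _ _ hi', List.getD_eq_getElem _ _ hi']
  rw [this]
  have hm : ((S1 n).sort (· ≤ ·))[i] ∈ S1 n := by
    rw [← Finset.mem_sort (· ≤ ·)]
    exact List.getElem_mem _
  unfold S1 at hm
  rw [Finset.mem_filter] at hm
  exact hm.2

lemma sig_pbit_zero (i : ℕ) (hi : pcount (2 * n + 2) ≤ i) (hi2 : i < 2 * n + 2) :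
    pbit (sig n i) = 0 := by
  have hlen : ((S1 n).sort (· ≤ ·)).length = pcount (2 * n + 2) := by
    rw [Finset.length_sort, S1_card]
  have hi' : i - pcount (2 * n + 2) < ((S0 n).sort (· ≤ ·)).length := by
    have h := labList_length n
    unfold labList at h
    rw [List.length_append, hlen] at h
    omega
  have : sig n i = ((S0 n).sort (· ≤ ·))[i - pcount (2 * n + 2)] := by
    unfold sig labList
    rw [List.getD_append_right _ _ _ _ (by rw [hlen]; exact hi), hlen,
      List.getD_eq_getElem _ _ hi']
  rw [this]
  have hm : ((S0 n).sort (· ≤ ·))[i - pcount (2 * n + 2)] ∈ S0 n := by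
    rw [← Finset.mem_sort (· ≤ ·)]
    exact List.getElem_mem _
  have hm2 : ¬ pbit (((S0 n).sort (· ≤ ·))[i - pcount (2 * n + 2)]) = 1 := by
    unfold S0 at hm
    rw [Finset.mem_filter] at hm
    exact hm.2
  have := pbit_lt (((S0 n).sort (· ≤ ·))[i - pcount (2 * n + 2)])
  omega

end Construction

/-- index map for leaves: triangle j = t/2 -/
def iota (g u c1 t : ℕ) : ℕ :=
  if t / 2 < g then t + 1
  else if t % 2 = 0 then
    (if t / 2 < g + u then c1 + 2 * (t / 2 - g) else c1 + u + (t / 2 - g))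
  else
    (if t / 2 < g + u then c1 + 2 * (t / 2 - g) + 1 else 2 * g + 1 + (t / 2 - g - u))

section IotaFacts

variable {n g k u c1 : ℕ} (hgk : g + k = n) (hcu : c1 + u = 2 * g + k + 1) (huk : u ≤ k)
  (hgc : 2 * g + 1 ≤ c1)

include hgk hcu huk hgc

lemma iota_pos (t : ℕ) (ht : t < 2 * n) : 1 ≤ iota g u c1 t := by
  unfold iota; split_ifs <;> omega

lemma iota_lt (t : ℕ) (ht : t < 2 * n) : iota g u c1 t < 2 * n + 2 := by
  unfold iota; split_ifs <;> omega

lemma iota_inj (t t' : ℕ) (ht : t < 2 * n) (ht' : t' < 2 * n)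
    (h : iota g u c1 t = iota g u c1 t') : t = t' := by
  unfold iota at h; split_ifs at h <;> omega

lemma iota_even_lo (j : ℕ) (hj : j < g) : iota g u c1 (2 * j) < c1 := by
  unfold iota; split_ifs <;> omega

lemma iota_odd_lo (j : ℕ) (hj : j < g) : iota g u c1 (2 * j + 1) < c1 := by
  unfold iota; split_ifs <;> omega

lemma iota_even_hi (j : ℕ) (hj1 : g ≤ j) (hj2 : j < n) : c1 ≤ iota g u c1 (2 * j) := by
  unfold iota; split_ifs <;> omega

lemma iota_odd_mid (j : ℕ) (hj1 : g ≤ j) (hj2 : j < g + u) :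
    c1 ≤ iota g u c1 (2 * j + 1) := by
  unfold iota; split_ifs <;> omega

lemma iota_odd_hi (j : ℕ) (hj1 : g + u ≤ j) (hj2 : j < n) :
    iota g u c1 (2 * j + 1) < c1 := by
  unfold iota; split_ifs <;> omega

end IotaFacts

lemma sum_ite_lt (N gg : ℕ) (h : gg ≤ N) :
    (∑ j ∈ Finset.range N, (if j < gg then 0 else 2)) = 2 * (N - gg) := by
  induction N with
  | zero => simp
  | succ m ih =>
    by_cases hm : gg ≤ m
    · rw [Finset.sum_range_succ, ih hm, if_neg (by omega)]
      omega
    · have hall : ∀ j ∈ Finset.range (m + 1), (if j < gg then 0 else 2) = 0 := by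
        intro j hj
        rw [Finset.mem_range] at hj
        exact if_pos (by omega)
      rw [Finset.sum_congr rfl hall, Finset.sum_const, smul_zero]
      omega

lemma pcount_bounds (n : ℕ) (hn : 1 ≤ n) (h2 : ¬ n % 4 = 2) :
    2 * (n - (3 * n + 2) / 4) + 1 ≤ pcount (2 * n + 2) ∧
      pcount (2 * n + 2) ≤ 2 * (n - (3 * n + 2) / 4) + (3 * n + 2) / 4 + 1 := by
  have h := pcount_eq (2 * n + 2)
  split_ifs at h <;> omega

lemma backward_dir (n : ℕ) (hn : 1 ≤ n) (h2 : ¬ n % 4 = 2) :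
    IsPerrinCordial (friendshipGraph n) := by
  classical
  set k := (3 * n + 2) / 4 with hk
  set g := n - k with hg
  set c1 := pcount (2 * n + 2) with hc1
  set u := 2 * g + k + 1 - c1 with hu
  obtain ⟨hpl, hpu⟩ := pcount_bounds n hn h2
  have hkn : k ≤ n := by omega
  have hgk : g + k = n := by omega
  have hcu : c1 + u = 2 * g + k + 1 := by omega
  have huk : u ≤ k := by omega
  have hgc : 2 * g + 1 ≤ c1 := hpl
  have hcard : Fintype.card (Option (Fin (2 * n))) + 1 = 2 * n + 2 := by simp
  -- the labeling
  have hι : ∀ v : Option (Fin (2 * n)), v.elim 0 (fun x => iota g u c1 x.val) < 2 * n + 2 := by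
    rintro (_ | x)
    · exact (by omega : (0:ℕ) < 2 * n + 2)
    · exact iota_lt hgk hcu huk hgc x.val x.isLt
  refine ⟨fun v => ⟨sig n (v.elim 0 (fun x => iota g u c1 x.val)), by
    rw [hcard]; exact sig_lt n _ (hι v)⟩, ?_, ?_⟩
  · -- injectivity
    intro v w h
    have hval : sig n (v.elim 0 (fun x => iota g u c1 x.val))
        = sig n (w.elim 0 (fun x => iota g u c1 x.val)) := congrArg Fin.val h
    have hel := sig_inj n _ _ (hι v) (hι w) hval
    match v, w with
    | none, none => rfl
    | none, some x =>
      exfalso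
      have hp := iota_pos hgk hcu huk hgc x.val x.isLt
      have hel' : 0 = iota g u c1 x.val := hel
      omega
    | some x, none =>
      exfalso
      have hp := iota_pos hgk hcu huk hgc x.val x.isLt
      have hel' : iota g u c1 x.val = 0 := hel
      omega
    | some x, some y =>
      have hel' : iota g u c1 x.val = iota g u c1 y.val := hel
      have := iota_inj hgk hcu huk hgc x.val y.val x.isLt y.isLt hel'
      exact congrArg some (Fin.ext this)
  · -- the count condition
    set f : Option (Fin (2 * n)) → ℕ :=
      fun v => sig n (v.elim 0 (fun x => iota g u c1 x.val)) with hf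
    show |(eCount (friendshipGraph n) f 0 : ℤ) - (eCount (friendshipGraph n) f 1 : ℤ)| ≤ 1
    -- pbit values
    have hapex : pbit (f none) = 1 := sig_pbit_one n 0 (by omega)
    have hA : ∀ j : Fin n, pbit (f (some (lva n j))) = if j.val < g then 1 else 0 := by
      intro j
      have hval : (lva n j).val = 2 * j.val := rfl
      simp only [hf, Option.elim, hval]
      split_ifs with hj
      · exact sig_pbit_one n _ (iota_even_lo hgk hcu huk hgc j.val hj)
      · exact sig_pbit_zero n _ (iota_even_hi hgk hcu huk hgc j.val (by omega) j.isLt)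
          (iota_lt hgk hcu huk hgc _ (by have := j.isLt; omega))
    have hB : ∀ j : Fin n, pbit (f (some (lvb n j))) =
        if j.val < g ∨ g + u ≤ j.val then 1 else 0 := by
      intro j
      have hval : (lvb n j).val = 2 * j.val + 1 := rfl
      simp only [hf, Option.elim, hval]
      split_ifs with hj
      · rcases hj with hj | hj
        · exact sig_pbit_one n _ (iota_odd_lo hgk hcu huk hgc j.val hj)
        · exact sig_pbit_one n _ (iota_odd_hi hgk hcu huk hgc j.val hj j.isLt)
      · push_neg at hj
        exact sig_pbit_zero n _ (iota_odd_mid hgk hcu huk hgc j.val (by omega) (by omega))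
          (iota_lt hgk hcu huk hgc _ (by have := j.isLt; omega))
    -- compute the two counts
    have he1 : eCount (friendshipGraph n) f 1 = 2 * k := by
      rw [eCount_sum]
      have hterm : ∀ j : Fin n,
          ((if (pbit (f none) + pbit (f (some (lva n j)))) % 2 = 1 then 1 else 0)
          + (if (pbit (f none) + pbit (f (some (lvb n j)))) % 2 = 1 then 1 else 0)
          + (if (pbit (f (some (lva n j))) + pbit (f (some (lvb n j)))) % 2 = 1 then 1 else 0))
          = if j.val < g then 0 else 2 := by
        intro j
        rw [hapex, hA j, hB j]
        by_cases hj : j.val < g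
        · simp [hj]
        · by_cases hj2 : g + u ≤ j.val <;> simp [hj, hj2]
      rw [Finset.sum_congr rfl (fun j _ => hterm j)]
      rw [Fin.sum_univ_eq_sum_range (fun j => if j < g then 0 else 2) n]
      rw [sum_ite_lt n g (by omega)]
      omega
    have hadd := eCount_add n f
    rw [he1]
    have he0 : eCount (friendshipGraph n) f 0 = 3 * n - 2 * k := by omega
    rw [he0, abs_le]
    constructor <;> omega

/-- for `n ≥ 1`, the friendship graph `F n` is Perrin cordial iff
`n ≢ 2 (mod 4)`. -/
theorem friendshipGraph_isPerrinCordial_iff (n : ℕ) (hn : 1 ≤ n) :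
    IsPerrinCordial (friendshipGraph n) ↔ ¬ n % 4 = 2 := by
  constructor
  · intro h hc
    exact forward_dir n hc h
  · exact backward_dir n hn
end
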